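/- arXiv:1202.4473 — 2 statements merged into one kernel-verified Lean document; each statement's English description precedes it below -/
import Mathlib

section
/- Let F_1 ⊂ ... ⊂ F_n be a filtration and X_1,...,X_n real random variables with X_t measurable with respect to F_t, E[X_t | F_{t-1}] = 0, |X_t| ≤ b for some b > 0, and set V_n = Σ_{t=1}^n E[X_t² | F_{t-1}]. Then for any ε > 0 and V > 0, P[Σ_{t=1}^n X_t ≥ ε and V_n ≤ V] ≤ exp(-ε² / (2V + 2bε/3)). -/
open MeasureTheory ProbabilityTheory

open scoped Nat

lemma my_exp_tsum (y : ℝ) : Real.exp y - 1 - y = ∑' k : ℕ, y ^ (k + 2) / (k + 2)! := by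
  have h : Real.exp y = ∑' n : ℕ, y ^ n / n ! := by
    rw [Real.exp_eq_exp_ℝ, NormedSpace.exp_eq_tsum_div]
  have hs : Summable (fun n : ℕ => y ^ n / n !) := Real.summable_pow_div_factorial y
  have h2 := Summable.sum_add_tsum_nat_add (f := fun n : ℕ => y ^ n / n !) 2 hs
  rw [h, ← h2]
  simp only [Finset.sum_range_succ, Finset.sum_range_one]
  norm_num
  ring

lemma my_summable_shift (y : ℝ) : Summable (fun k : ℕ => y ^ (k + 2) / (k + 2)!) :=
  (summable_nat_add_iff 2).2 (Real.summable_pow_div_factorial y)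

-- key1: exp y ≤ 1 + y + (y^2/z^2) * (exp z - 1 - z) for |y| ≤ z, 0 < z
lemma my_key1 (y z : ℝ) (hz : 0 < z) (hyz : |y| ≤ z) :
    Real.exp y ≤ 1 + y + y ^ 2 / z ^ 2 * (Real.exp z - 1 - z) := by
  have hmain : Real.exp y - 1 - y ≤ y ^ 2 / z ^ 2 * (Real.exp z - 1 - z) := by
    rw [my_exp_tsum y, my_exp_tsum z, ← tsum_mul_left]
    refine Summable.tsum_le_tsum ?_ (my_summable_shift y) ((my_summable_shift z).mul_left _)
    intro k
    have h1 : y ^ (k + 2) ≤ y ^ 2 / z ^ 2 * z ^ (k + 2) := by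
      have : |y| ^ (k + 2) ≤ y ^ 2 * z ^ k := by
        calc |y| ^ (k + 2) = |y| ^ 2 * |y| ^ k := by ring
        _ ≤ y ^ 2 * z ^ k := by
            rw [sq_abs]
            exact mul_le_mul_of_nonneg_left (pow_le_pow_left₀ (abs_nonneg y) hyz k)
              (sq_nonneg y)
      calc y ^ (k + 2) ≤ |y ^ (k + 2)| := le_abs_self _
        _ = |y| ^ (k + 2) := by rw [abs_pow]
        _ ≤ y ^ 2 * z ^ k := this
        _ = y ^ 2 / z ^ 2 * z ^ (k + 2) := by field_simp; ring
    have hfac : (0:ℝ) < (k + 2)! := by positivity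
    calc y ^ (k + 2) / (k + 2)! ≤ (y ^ 2 / z ^ 2 * z ^ (k + 2)) / (k + 2)! :=
          by gcongr
      _ = y ^ 2 / z ^ 2 * (z ^ (k + 2) / (k + 2)!) := by ring
  linarith

lemma my_fact_ge (k : ℕ) : (2 * 3 ^ k : ℝ) ≤ (k + 2)! := by
  induction k with
  | zero => norm_num
  | succ k ih =>
    have : ((k + 3)! : ℝ) = (k + 3) * (k + 2)! := by
      push_cast [Nat.factorial_succ]; ring_nf
    have hpos : (0:ℝ) < (k + 2)! := by positivity
    calc (2 * 3 ^ (k+1) : ℝ) = 3 * (2 * 3 ^ k) := by ring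
      _ ≤ 3 * (k + 2)! := by nlinarith
      _ ≤ ((k + 1) + 2)! := by
          rw [show (k+1)+2 = k+3 from rfl, this]
          nlinarith

lemma my_key2 (z : ℝ) (h0 : 0 ≤ z) (h3 : z < 3) :
    Real.exp z - 1 - z ≤ z ^ 2 / (2 * (1 - z / 3)) := by
  have hr : z / 3 < 1 := by linarith
  have hr0 : 0 ≤ z / 3 := by linarith
  have hgeom : Summable (fun k : ℕ => (z/3) ^ k) := summable_geometric_of_lt_one hr0 hr
  have htsum : ∑' k : ℕ, (z/3) ^ k = (1 - z/3)⁻¹ := tsum_geometric_of_lt_one hr0 hr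
  rw [my_exp_tsum z]
  have hle : ∀ k : ℕ, z ^ (k + 2) / (k + 2)! ≤ z ^ 2 / 2 * (z/3) ^ k := by
    intro k
    have hfac : (0:ℝ) < (k + 2)! := by positivity
    have h1 : z ^ (k + 2) = z ^ 2 * z ^ k := by ring
    have h2 : z ^ 2 / 2 * (z/3) ^ k = z ^ 2 * z ^ k / (2 * 3 ^ k) := by
      rw [div_pow]; ring
    rw [h1, h2, div_le_div_iff₀ hfac (by positivity)]
    have hzz : 0 ≤ z ^ 2 * z ^ k := by positivity
    nlinarith [my_fact_ge k]
  calc (∑' k : ℕ, z ^ (k + 2) / (k + 2)!) ≤ ∑' k : ℕ, z ^ 2 / 2 * (z/3) ^ k :=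
      Summable.tsum_le_tsum hle (my_summable_shift z) (hgeom.mul_left _)
    _ = z ^ 2 / 2 * (1 - z/3)⁻¹ := by rw [tsum_mul_left, htsum]
    _ = z ^ 2 / (2 * (1 - z/3)) := by
        rw [div_mul_eq_mul_div, mul_comm, ← div_div]
        field_simp

lemma my_cond_step {Ω : Type*} [MeasureSpace Ω] [IsProbabilityMeasure (ℙ : Measure Ω)]
    (G : MeasurableSpace Ω) (hG : G ≤ (MeasureSpace.toMeasurableSpace : MeasurableSpace Ω))
    (X : Ω → ℝ) (b l : ℝ) (hb : 0 < b) (hl : 0 < l)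
    (hX : Measurable[(MeasureSpace.toMeasurableSpace : MeasurableSpace Ω)] X) (hbdd : ∀ ω, |X ω| ≤ b)
    (hcond : ℙ[X|G] =ᵐ[ℙ] 0) :
    ℙ[fun ω => Real.exp (l * X ω)|G] ≤ᵐ[ℙ]
      fun ω => Real.exp ((Real.exp (l*b) - l*b - 1)/b^2 * (ℙ[fun ω' => (X ω' ^ 2) | G]) ω) := by
  set c : ℝ := (Real.exp (l*b) - l*b - 1)/b^2 with hc
  have hXint : Integrable X ℙ :=
    (integrable_const b).mono' (hX.aestronglyMeasurable (μ := ℙ)) (ae_of_all _ fun ω => by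
      simpa [Real.norm_eq_abs, abs_of_pos hb] using hbdd ω)
  have hX2int : Integrable (fun ω => X ω ^ 2) ℙ :=
    (integrable_const (b^2)).mono' (hX.pow_const 2).aestronglyMeasurable (ae_of_all _ fun ω => by
      rw [Real.norm_eq_abs, abs_of_nonneg (sq_nonneg _)]
      nlinarith [hbdd ω, sq_abs (X ω), abs_nonneg (X ω)])
  have hexpint : Integrable (fun ω => Real.exp (l * X ω)) ℙ :=
    (integrable_const (Real.exp (l*b))).mono'
      ((Real.measurable_exp.comp (hX.const_mul l)).aestronglyMeasurable)
      (ae_of_all _ fun ω => by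
        rw [Real.norm_eq_abs, abs_of_pos (Real.exp_pos _)]
        exact Real.exp_le_exp.2 (by nlinarith [le_of_abs_le (hbdd ω), abs_nonneg (X ω)]))
  have hptw : ∀ ω, Real.exp (l * X ω) ≤ 1 + l * X ω + c * X ω ^ 2 := by
    intro ω
    have h1 := my_key1 (l * X ω) (l * b) (by positivity)
      (by rw [abs_mul, abs_of_pos hl]; exact mul_le_mul_of_nonneg_left (hbdd ω) hl.le)
    have h2 : (l * X ω) ^ 2 / (l * b) ^ 2 * (Real.exp (l*b) - 1 - (l*b)) = c * X ω ^ 2 := by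
      rw [hc]; field_simp; ring
    calc Real.exp (l * X ω) ≤ 1 + l * X ω + (l * X ω) ^ 2 / (l * b) ^ 2 *
          (Real.exp (l*b) - 1 - (l*b)) := h1
      _ = 1 + l * X ω + c * X ω ^ 2 := by rw [h2]
  have hsumint : Integrable (fun ω => 1 + l * X ω + c * X ω ^ 2) ℙ :=
    ((integrable_const 1).add (hXint.const_mul l)).add (hX2int.const_mul c)
  have hmono : ℙ[fun ω => Real.exp (l * X ω)|G] ≤ᵐ[ℙ]
      ℙ[fun ω => 1 + l * X ω + c * X ω ^ 2|G] :=
    condExp_mono hexpint hsumint (ae_of_all _ hptw)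
  have hlin : ℙ[fun ω => 1 + l * X ω + c * X ω ^ 2|G] =ᵐ[ℙ]
      fun ω => 1 + c * (ℙ[fun ω' => (X ω' ^ 2) | G]) ω := by
    have e1 : (fun ω => 1 + l * X ω + c * X ω ^ 2)
        = (fun _ => (1:ℝ)) + (l • X + c • (fun ω => X ω ^ 2)) := by
      funext ω; simp [Pi.add_apply]; ring
    rw [e1]
    refine (condExp_add (integrable_const 1) ((hXint.smul l).add (hX2int.smul c)) G).trans ?_
    have h2 := condExp_add (μ := ℙ) (m := G) (hXint.smul l) (hX2int.smul c)
    have h3 := condExp_smul (μ := ℙ) (m := G) l X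
    have h4 := condExp_smul (μ := ℙ) (m := G) c (fun ω => X ω ^ 2)
    have h5 : ℙ[fun _ : Ω => (1:ℝ)|G] = fun _ => (1:ℝ) := condExp_const hG 1
    filter_upwards [h2, h3, h4, hcond] with ω hω hω3 hω4 hω5
    simp only [Pi.add_apply, h5, Pi.smul_apply, smul_eq_mul, Pi.zero_apply] at hω hω3 hω4 hω5 ⊢
    rw [hω, hω3, hω4, hω5]
    ring
  have hfinal : ∀ x : ℝ, 1 + c * x ≤ Real.exp (c * x) := fun x => by
    linarith [Real.add_one_le_exp (c * x)]
  filter_upwards [hmono, hlin] with ω h1 h2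
  calc (ℙ[fun ω => Real.exp (l * X ω)|G]) ω ≤ (ℙ[fun ω => 1 + l * X ω + c * X ω ^ 2|G]) ω := h1
    _ = 1 + c * (ℙ[fun ω' => (X ω' ^ 2) | G]) ω := h2
    _ ≤ Real.exp (c * (ℙ[fun ω' => (X ω' ^ 2) | G]) ω) := hfinal _

lemma my_super {Ω : Type*} [MeasureSpace Ω] [IsProbabilityMeasure (ℙ : Measure Ω)]
    (n : ℕ) (F : ℕ → MeasurableSpace Ω) (hFmono : Monotone F)
    (hFle : ∀ t, F t ≤ (MeasureSpace.toMeasurableSpace : MeasurableSpace Ω))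
    (X : ℕ → Ω → ℝ) (b l c : ℝ) (hb : 0 < b) (hl : 0 < l) (hcnn : 0 ≤ c)
    (hXmeas : ∀ t ∈ Finset.Icc 1 n, Measurable[F t] (X t))
    (hXbdd : ∀ t ∈ Finset.Icc 1 n, ∀ ω, |X t ω| ≤ b)
    (hstep : ∀ t ∈ Finset.Icc 1 n,
      ℙ[fun ω => Real.exp (l * X t ω)|F (t-1)] ≤ᵐ[ℙ]
        fun ω => Real.exp (c * (ℙ[fun ω' => (X t ω' ^ 2) | F (t-1)]) ω)) :
    ∀ m, m ≤ n → ∫ ω, Real.exp (l * (∑ t ∈ Finset.Icc 1 m, X t ω)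
      - c * (∑ t ∈ Finset.Icc 1 m, (ℙ[fun ω' => (X t ω' ^ 2) | F (t-1)]) ω)) ∂ℙ ≤ 1 := by
  -- preliminary facts
  have hmeas_amb : ∀ t ∈ Finset.Icc 1 n, Measurable (X t) :=
    fun t ht => (hXmeas t ht).mono (hFle t) le_rfl
  have hW_meas : ∀ t : ℕ, StronglyMeasurable (fun ω => (ℙ[fun ω' => (X t ω' ^ 2) | F (t-1)]) ω) :=
    fun t => (stronglyMeasurable_condExp (m := F (t-1))).mono (hFle _)
  have hWt_nonneg : ∀ t : ℕ, 0 ≤ᵐ[ℙ] ℙ[fun ω' => (X t ω' ^ 2) | F (t-1)] :=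
    fun t => condExp_nonneg (ae_of_all _ fun ω => sq_nonneg _)
  -- a.e. nonnegativity of partial sums W m
  have hW_nonneg : ∀ m : ℕ, ∀ᵐ ω ∂ℙ,
      0 ≤ ∑ t ∈ Finset.Icc 1 m, (ℙ[fun ω' => (X t ω' ^ 2) | F (t-1)]) ω := by
    intro m
    have : ∀ᵐ ω ∂ℙ, ∀ t ∈ Finset.Icc 1 m, 0 ≤ (ℙ[fun ω' => (X t ω' ^ 2) | F (t-1)]) ω := by
      exact (MeasureTheory.ae_ball_iff (Finset.Icc 1 m).countable_toSet).2
        fun t _ => hWt_nonneg t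
    filter_upwards [this] with ω hω
    exact Finset.sum_nonneg hω
  -- integrability of exp(l * S m - c * W m') for W m' a partial sum and S m bounded
  have key_int : ∀ m m' : ℕ, m ≤ n →
      Integrable (fun ω => Real.exp (l * (∑ t ∈ Finset.Icc 1 m, X t ω)
        - c * (∑ t ∈ Finset.Icc 1 m', (ℙ[fun ω' => (X t ω' ^ 2) | F (t-1)]) ω))) ℙ := by
    intro m m' hmn
    have hSmeas : Measurable (fun ω => ∑ t ∈ Finset.Icc 1 m, X t ω) := by
      apply Finset.measurable_sum
      intro t ht
      exact hmeas_amb t (Finset.mem_Icc.2 ⟨(Finset.mem_Icc.1 ht).1,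
        le_trans (Finset.mem_Icc.1 ht).2 hmn⟩)
    have hmeas : AEStronglyMeasurable (fun ω => Real.exp (l * (∑ t ∈ Finset.Icc 1 m, X t ω)
        - c * (∑ t ∈ Finset.Icc 1 m', (ℙ[fun ω' => (X t ω' ^ 2) | F (t-1)]) ω))) ℙ := by
      apply Measurable.aestronglyMeasurable
      apply Real.measurable_exp.comp
      apply Measurable.sub
      · exact (hSmeas.const_mul l)
      · exact ((Finset.measurable_sum _ (fun t _ => (hW_meas t).measurable)).const_mul c)
    refine (integrable_const (Real.exp (l * (m * b)))).mono' hmeas ?_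
    filter_upwards [hW_nonneg m'] with ω hω
    rw [Real.norm_eq_abs, abs_of_pos (Real.exp_pos _)]
    apply Real.exp_le_exp.2
    have hS : ∑ t ∈ Finset.Icc 1 m, X t ω ≤ m * b := by
      calc ∑ t ∈ Finset.Icc 1 m, X t ω ≤ ∑ t ∈ Finset.Icc 1 m, b := by
            apply Finset.sum_le_sum
            intro t ht
            exact le_of_abs_le (hXbdd t (Finset.mem_Icc.2 ⟨(Finset.mem_Icc.1 ht).1,
              le_trans (Finset.mem_Icc.1 ht).2 hmn⟩) ω)
        _ = m * b := by rw [Finset.sum_const, Nat.card_Icc]; simp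
    nlinarith
  -- main induction
  intro m
  induction m with
  | zero =>
    intro _
    rw [Finset.Icc_eq_empty (by norm_num : ¬(1:ℕ) ≤ 0)]
    simp
  | succ m ih =>
    intro hmn
    have hmn' : m ≤ n := le_trans (Nat.le_succ m) hmn
    have hIH := ih hmn'
    have hm1 : m + 1 ∈ Finset.Icc 1 n := Finset.mem_Icc.2 ⟨Nat.succ_le_succ (Nat.zero_le m), hmn⟩
    set G := F m with hG
    -- f and g
    set f : Ω → ℝ := fun ω => Real.exp (l * (∑ t ∈ Finset.Icc 1 m, X t ω)
      - c * (∑ t ∈ Finset.Icc 1 (m+1), (ℙ[fun ω' => (X t ω' ^ 2) | F (t-1)]) ω)) with hf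
    set g : Ω → ℝ := fun ω => Real.exp (l * X (m+1) ω) with hgdef
    have h1le : (1:ℕ) ≤ m + 1 := Nat.succ_le_succ (Nat.zero_le m)
    -- decomposition
    have hdecomp : (fun ω => Real.exp (l * (∑ t ∈ Finset.Icc 1 (m+1), X t ω)
        - c * (∑ t ∈ Finset.Icc 1 (m+1), (ℙ[fun ω' => (X t ω' ^ 2) | F (t-1)]) ω))) = f * g := by
      funext ω
      rw [Finset.sum_Icc_succ_top h1le (fun t => X t ω)]
      simp only [hf, hgdef, Pi.mul_apply]
      rw [← Real.exp_add]
      ring_nf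
    -- strongly measurable f w.r.t. G
    have hfSM : StronglyMeasurable[G] f := by
      have hS : Measurable[G] (fun ω => ∑ t ∈ Finset.Icc 1 m, X t ω) := by
        apply Finset.measurable_sum
        intro t ht
        exact (hXmeas t (Finset.mem_Icc.2 ⟨(Finset.mem_Icc.1 ht).1,
          le_trans (Finset.mem_Icc.1 ht).2 hmn'⟩)).mono
          (hFmono (Finset.mem_Icc.1 ht).2) le_rfl
      have hW : Measurable[G] (fun ω => ∑ t ∈ Finset.Icc 1 (m+1),
          (ℙ[fun ω' => (X t ω' ^ 2) | F (t-1)]) ω) := by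
        apply Finset.measurable_sum
        intro t ht
        have ht1 : t - 1 ≤ m := by
          have := (Finset.mem_Icc.1 ht).2
          omega
        exact ((stronglyMeasurable_condExp (m := F (t-1))).measurable).mono
          (hFmono ht1) le_rfl
      exact (Real.measurable_exp.comp ((hS.const_mul l).sub (hW.const_mul c))).stronglyMeasurable
    -- integrability
    have hfg_int : Integrable (f * g) ℙ := by
      rw [← hdecomp]; exact key_int (m+1) (m+1) hmn
    have hg_int : Integrable g ℙ := by
      refine (integrable_const (Real.exp (l * b))).mono'
        ((Real.measurable_exp.comp ((hmeas_amb (m+1) hm1).const_mul l)).aestronglyMeasurable)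
        (ae_of_all _ fun ω => ?_)
      rw [Real.norm_eq_abs, abs_of_pos (Real.exp_pos _)]
      have hx := le_of_abs_le (hXbdd (m+1) hm1 ω)
      exact Real.exp_le_exp.2 (by nlinarith)
    -- condexp pull-out
    have step2 : (MeasureTheory.condExp G ℙ (f * g)) =ᵐ[ℙ] f * (MeasureTheory.condExp G ℙ g) :=
      condExp_mul_of_stronglyMeasurable_left hfSM hfg_int hg_int
    have hfμg_int : Integrable (f * (MeasureTheory.condExp G ℙ g)) ℙ := (integrable_condExp).congr step2
    -- RHS function
    have hRHS_eq : (fun ω => f ω * Real.exp (c * (ℙ[fun ω' => (X (m+1) ω' ^ 2) | F m]) ω))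
        = fun ω => Real.exp (l * (∑ t ∈ Finset.Icc 1 m, X t ω)
          - c * (∑ t ∈ Finset.Icc 1 m, (ℙ[fun ω' => (X t ω' ^ 2) | F (t-1)]) ω)) := by
      funext ω
      simp only [hf]
      rw [← Real.exp_add]
      congr 1
      rw [Finset.sum_Icc_succ_top h1le
        (fun t => (ℙ[fun ω' => (X t ω' ^ 2) | F (t-1)]) ω)]
      simp only [Nat.add_sub_cancel]
      ring
    have hRHS_int : Integrable (fun ω => f ω *
        Real.exp (c * (ℙ[fun ω' => (X (m+1) ω' ^ 2) | F m]) ω)) ℙ := by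
      rw [hRHS_eq]; exact key_int m m hmn'
    -- the step bound
    have hstep' := hstep (m+1) hm1
    simp only [Nat.add_sub_cancel] at hstep'
    have hae : (f * (MeasureTheory.condExp G ℙ g)) ≤ᵐ[ℙ] fun ω => f ω *
        Real.exp (c * (ℙ[fun ω' => (X (m+1) ω' ^ 2) | F m]) ω) := by
      filter_upwards [hstep'] with ω hω
      simp only [Pi.mul_apply]
      exact mul_le_mul_of_nonneg_left hω (Real.exp_pos _).le
    -- chain
    calc ∫ ω, Real.exp (l * (∑ t ∈ Finset.Icc 1 (m+1), X t ω)
        - c * (∑ t ∈ Finset.Icc 1 (m+1), (ℙ[fun ω' => (X t ω' ^ 2) | F (t-1)]) ω)) ∂ℙ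
        = ∫ ω, (f * g) ω ∂ℙ := by rw [hdecomp]
      _ = ∫ ω, ((MeasureTheory.condExp G ℙ (f * g))) ω ∂ℙ := (integral_condExp (hFle m)).symm
      _ = ∫ ω, (f * (MeasureTheory.condExp G ℙ g)) ω ∂ℙ := integral_congr_ae step2
      _ ≤ ∫ ω, f ω * Real.exp (c * (ℙ[fun ω' => (X (m+1) ω' ^ 2) | F m]) ω) ∂ℙ :=
          integral_mono_ae hfμg_int hRHS_int hae
      _ = ∫ ω, Real.exp (l * (∑ t ∈ Finset.Icc 1 m, X t ω)
          - c * (∑ t ∈ Finset.Icc 1 m, (ℙ[fun ω' => (X t ω' ^ 2) | F (t-1)]) ω)) ∂ℙ := by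
          rw [hRHS_eq]
      _ ≤ 1 := hIH

theorem stmt_4 {Ω : Type*} [MeasureSpace Ω] [IsProbabilityMeasure (ℙ : Measure Ω)]
    (n : ℕ) (F : ℕ → MeasurableSpace Ω) (hFmono : Monotone F)
    (hFle : ∀ t, F t ≤ (MeasureSpace.toMeasurableSpace : MeasurableSpace Ω))
    (X : ℕ → Ω → ℝ) (b : ℝ) (hb : 0 < b)
    (hXmeas : ∀ t ∈ Finset.Icc 1 n, Measurable[F t] (X t))
    (hcond : ∀ t ∈ Finset.Icc 1 n, ℙ[X t | F (t - 1)] =ᵐ[ℙ] 0)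
    (hXbdd : ∀ t ∈ Finset.Icc 1 n, ∀ ω, |X t ω| ≤ b)
    (Vn : Ω → ℝ)
    (hVn : Vn = fun ω => ∑ t ∈ Finset.Icc 1 n, (ℙ[fun ω' => (X t ω') ^ 2 | F (t - 1)]) ω)
    (ε V : ℝ) (hε : 0 < ε) (hV : 0 < V) :
    (ℙ {ω | ε ≤ ∑ t ∈ Finset.Icc 1 n, X t ω ∧ Vn ω ≤ V}).toReal
      ≤ Real.exp (-ε ^ 2 / (2 * V + 2 * b * ε / 3)) := by
  subst hVn
  set D : ℝ := V + b * ε / 3 with hD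
  have hDpos : 0 < D := by positivity
  set l : ℝ := ε / D with hl
  have hlpos : 0 < l := by positivity
  set c : ℝ := (Real.exp (l * b) - l * b - 1) / b ^ 2 with hc
  have hcnn : 0 ≤ c := by
    apply div_nonneg _ (by positivity)
    linarith [Real.add_one_le_exp (l * b)]
  have hmeas_amb : ∀ t ∈ Finset.Icc 1 n, Measurable (X t) :=
    fun t ht => (hXmeas t ht).mono (hFle t) le_rfl
  -- step hypothesis
  have hstep : ∀ t ∈ Finset.Icc 1 n,
      ℙ[fun ω => Real.exp (l * X t ω)|F (t-1)] ≤ᵐ[ℙ]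
        fun ω => Real.exp (c * (ℙ[fun ω' => (X t ω' ^ 2) | F (t-1)]) ω) := by
    intro t ht
    exact my_cond_step (F (t-1)) (hFle (t-1)) (X t) b l hb hlpos
      (hmeas_amb t ht) (hXbdd t ht) (hcond t ht)
  have hint := my_super n F hFmono hFle X b l c hb hlpos hcnn hXmeas hXbdd hstep n le_rfl
  -- notation
  set S : Ω → ℝ := fun ω => ∑ t ∈ Finset.Icc 1 n, X t ω with hS
  set W : Ω → ℝ := fun ω => ∑ t ∈ Finset.Icc 1 n, (ℙ[fun ω' => (X t ω' ^ 2) | F (t-1)]) ω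
    with hW
  have hYint : Integrable (fun ω => Real.exp (l * S ω - c * W ω)) ℙ := by
    -- reuse: same as key_int inside my_super; reprove quickly
    have hSmeas : Measurable S := Finset.measurable_sum _ (fun t ht => hmeas_amb t ht)
    have hWmeas : Measurable W := Finset.measurable_sum _ (fun t _ =>
      ((stronglyMeasurable_condExp (m := F (t-1))).mono (hFle _)).measurable)
    have hWnn : ∀ᵐ ω ∂ℙ, 0 ≤ W ω := by
      have : ∀ᵐ ω ∂ℙ, ∀ t ∈ Finset.Icc 1 n, 0 ≤ (ℙ[fun ω' => (X t ω' ^ 2) | F (t-1)]) ω :=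
        (MeasureTheory.ae_ball_iff (Finset.Icc 1 n).countable_toSet).2
          fun t _ => condExp_nonneg (ae_of_all _ fun ω => sq_nonneg _)
      filter_upwards [this] with ω hω using Finset.sum_nonneg hω
    refine (integrable_const (Real.exp (l * (n * b)))).mono'
      ((Real.measurable_exp.comp ((hSmeas.const_mul l).sub (hWmeas.const_mul c))).aestronglyMeasurable)
      ?_
    filter_upwards [hWnn] with ω hω
    rw [Real.norm_eq_abs, abs_of_pos (Real.exp_pos _)]
    apply Real.exp_le_exp.2
    have hSb : S ω ≤ n * b := by
      rw [hS]
      calc ∑ t ∈ Finset.Icc 1 n, X t ω ≤ ∑ t ∈ Finset.Icc 1 n, b :=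
            Finset.sum_le_sum fun t ht => le_of_abs_le (hXbdd t ht ω)
        _ = n * b := by rw [Finset.sum_const, Nat.card_Icc]; simp
    nlinarith
  -- Markov
  set A : Set Ω := {ω | ε ≤ S ω ∧ W ω ≤ V} with hA
  have hAmeas : MeasurableSet A := by
    have hSmeas : Measurable S := Finset.measurable_sum _ (fun t ht => hmeas_amb t ht)
    have hWmeas : Measurable W := Finset.measurable_sum _ (fun t _ =>
      ((stronglyMeasurable_condExp (m := F (t-1))).mono (hFle _)).measurable)
    exact (measurableSet_le measurable_const hSmeas).inter
      (measurableSet_le hWmeas measurable_const)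
  have hYnn : 0 ≤ᵐ[ℙ] fun ω => Real.exp (l * S ω - c * W ω) :=
    ae_of_all _ fun ω => (Real.exp_pos _).le
  have hmarkov : (ℙ A).toReal * Real.exp (l * ε - c * V) ≤ 1 := by
    have h1 : ∫ ω in A, Real.exp (l * ε - c * V) ∂ℙ
        = (ℙ A).toReal * Real.exp (l * ε - c * V) := by
      rw [setIntegral_const]; rfl
    have h2 : ∫ ω in A, Real.exp (l * ε - c * V) ∂ℙ
        ≤ ∫ ω in A, Real.exp (l * S ω - c * W ω) ∂ℙ := by
      refine setIntegral_mono_on (integrableOn_const)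
        hYint.integrableOn hAmeas ?_
      intro ω hω
      apply Real.exp_le_exp.2
      have h3 : l * ε ≤ l * S ω := mul_le_mul_of_nonneg_left hω.1 hlpos.le
      have h4 : c * W ω ≤ c * V := mul_le_mul_of_nonneg_left hω.2 hcnn
      linarith
    have h5 : ∫ ω in A, Real.exp (l * S ω - c * W ω) ∂ℙ
        ≤ ∫ ω, Real.exp (l * S ω - c * W ω) ∂ℙ :=
      setIntegral_le_integral hYint hYnn
    linarith
  -- conclude
  have hKpos : 0 < Real.exp (l * ε - c * V) := Real.exp_pos _
  have hfin : (ℙ A).toReal ≤ Real.exp (c * V - l * ε) := by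
    calc (ℙ A).toReal ≤ 1 / Real.exp (l * ε - c * V) := by
          rw [le_div_iff₀ hKpos]; exact hmarkov
        _ = Real.exp (c * V - l * ε) := by
          rw [one_div, ← Real.exp_neg]; ring_nf
  refine hfin.trans (Real.exp_le_exp.2 ?_)
  -- arithmetic: c * V - l * ε ≤ -ε^2/(2V + 2bε/3)
  have hz3 : l * b < 3 := by
    rw [hl, div_mul_eq_mul_div, div_lt_iff₀ hDpos]
    rw [hD]; nlinarith
  have hkey2 := my_key2 (l * b) (by positivity) hz3
  have hone : 1 - l * b / 3 = V / D := by
    rw [hl, hD]; field_simp; ring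
  have hcle : c ≤ ε ^ 2 / (2 * D * V) := by
    rw [hc]
    have : (l * b) ^ 2 / (2 * (1 - l * b / 3)) / b ^ 2 = ε ^ 2 / (2 * D * V) := by
      rw [hone, hl]
      field_simp
    calc (Real.exp (l*b) - l*b - 1) / b ^ 2
        ≤ ((l * b) ^ 2 / (2 * (1 - l * b / 3))) / b ^ 2 := by
          have he : Real.exp (l*b) - l*b - 1 = Real.exp (l*b) - 1 - l*b := by ring
          rw [he]
          exact div_le_div_of_nonneg_right hkey2 (by positivity)
        _ = ε ^ 2 / (2 * D * V) := this
  have hlε : l * ε = ε ^ 2 / D := by rw [hl]; field_simp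
  have h2D : 2 * V + 2 * b * ε / 3 = 2 * D := by rw [hD]; ring
  rw [h2D]
  have hcV : c * V ≤ ε ^ 2 / (2 * D) := by
    calc c * V ≤ ε ^ 2 / (2 * D * V) * V := mul_le_mul_of_nonneg_right hcle hV.le
      _ = ε ^ 2 / (2 * D) := by field_simp
  have : -ε ^ 2 / (2 * D) = ε ^ 2 / (2 * D) - ε ^ 2 / D := by field_simp; ring
  rw [this, hlε]
  linarith
end

section
/- Let F_1 ⊂ ... ⊂ F_n be a filtration and X_1,...,X_n a martingale difference sequence (X_t is F_t-measurable, E[X_t|F_{t-1}] = 0) with |X_t| ≤ b. Let V_n = Σ_{t=1}^n E[X_t² | F_{t-1}] and δ > 0. Then with probability at least 1 - δ, Σ_{t=1}^n X_t ≤ √(4·V_n·log(n/δ) + 5·b²·log²(n/δ)). -/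
open MeasureTheory ProbabilityTheory

section auxiliary
open Real

/-- If `f` has derivative `f'` which is nonnegative on `[a,∞)`, then `f a ≤ f x` for `x ≥ a`. -/
lemma aux_mono {f f' : ℝ → ℝ} (hd : ∀ t, HasDerivAt f (f' t) t)
    {a : ℝ} (hf' : ∀ t, a ≤ t → 0 ≤ f' t) : ∀ x, a ≤ x → f a ≤ f x := by
  intro x hx
  have hmono : MonotoneOn f (Set.Ici a) := by
    apply monotoneOn_of_deriv_nonneg (convex_Ici a)
    · exact fun t _ => (hd t).differentiableAt.continuousAt.continuousWithinAt
    · intro t _; exact (hd t).differentiableAt.differentiableWithinAt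
    · intro t ht
      rw [interior_Ici] at ht
      rw [(hd t).deriv]
      exact hf' t ht.le
  exact hmono Set.self_mem_Ici hx hx

lemma auxA1 (u : ℝ) : (1 - u) * Real.exp u ≤ 1 := by
  have h1 : Real.exp (-u) * Real.exp u = 1 := by rw [← Real.exp_add]; simp
  nlinarith [Real.add_one_le_exp (-u), Real.exp_pos u]

lemma auxA2 {u : ℝ} (hu : 0 ≤ u) : 0 ≤ (u - 2) * Real.exp u + (u + 2) := by
  have hd : ∀ t : ℝ, HasDerivAt (fun t => (t - 2) * Real.exp t + (t + 2))
      (1 * Real.exp t + (t - 2) * Real.exp t + 1) t := by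
    intro t
    exact (((hasDerivAt_id t).sub_const 2).mul (Real.hasDerivAt_exp t)).add
      ((hasDerivAt_id t).add_const 2)
  have h := aux_mono hd (a := 0) (fun t ht => by nlinarith [auxA1 t, Real.exp_pos t]) u hu
  simpa using h

lemma auxA3a {u : ℝ} (hu : 0 ≤ u) : 0 ≤ (u ^ 2 + 2 * u - 2) * Real.exp u + 2 := by
  rcases le_or_gt 0 (u ^ 2 + 2 * u - 2) with h | h
  · nlinarith [Real.exp_pos u]
  · have hu1 : u < 1 := by nlinarith
    nlinarith [auxA1 u, Real.exp_pos u, sq_nonneg u]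

lemma auxA3 {u : ℝ} (hu : 0 ≤ u) : 0 ≤ (u ^ 2 - 2) * Real.exp u + (2 * u + 2) := by
  have hd : ∀ t : ℝ, HasDerivAt (fun t => (t ^ 2 - 2) * Real.exp t + (2 * t + 2))
      ((2 : ℕ) * t ^ 1 * Real.exp t + (t ^ 2 - 2) * Real.exp t + 2 * 1) t := by
    intro t
    exact (((hasDerivAt_pow 2 t).sub_const 2).mul (Real.hasDerivAt_exp t)).add
      (((hasDerivAt_id t).const_mul 2).add_const 2)
  have h := aux_mono hd (a := 0) (fun t ht => by
      have := auxA3a ht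
      push_cast
      nlinarith) u hu
  norm_num at h
  linarith

lemma auxA4a {u : ℝ} (hu : 0 ≤ u) : 1 + u + u ^ 2 / 2 ≤ Real.exp u := by
  have hd : ∀ t : ℝ, HasDerivAt (fun t => Real.exp t - (1 + t + t ^ 2 / 2))
      (Real.exp t - (0 + 1 + (2 : ℕ) * t ^ 1 / 2)) t := by
    intro t
    exact (Real.hasDerivAt_exp t).sub
      (((hasDerivAt_const t 1).add (hasDerivAt_id t)).add ((hasDerivAt_pow 2 t).div_const 2))
  have h := aux_mono hd (a := 0) (fun t ht => by
      have := Real.add_one_le_exp t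
      push_cast
      nlinarith) u hu
  norm_num at h
  linarith

lemma auxA4b {u : ℝ} (hu : u ≤ 0) : Real.exp u ≤ 1 + u + u ^ 2 / 2 := by
  have hd : ∀ t : ℝ, HasDerivAt (fun t => Real.exp t - (1 + t + t ^ 2 / 2))
      (Real.exp t - (0 + 1 + (2 : ℕ) * t ^ 1 / 2)) t := by
    intro t
    exact (Real.hasDerivAt_exp t).sub
      (((hasDerivAt_const t 1).add (hasDerivAt_id t)).add ((hasDerivAt_pow 2 t).div_const 2))
  have h := aux_mono hd (a := u) (fun t ht => by
      have := Real.add_one_le_exp t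
      push_cast
      nlinarith) 0 hu
  norm_num at h
  linarith

lemma auxA5 {u v : ℝ} (hu : 0 ≤ u) (huv : u ≤ v) :
    v ^ 2 * (Real.exp u - 1 - u) ≤ u ^ 2 * (Real.exp v - 1 - v) := by
  set C := Real.exp u - 1 - u with hC
  have hC0 : 0 ≤ C := by have := Real.add_one_le_exp u; simp [hC]; linarith
  -- step 1 : the derivative function is nonneg on [u, ∞)
  have hstep1 : ∀ w, u ≤ w → 0 ≤ u ^ 2 * (Real.exp w - 1) - 2 * w * C := by
    have hd : ∀ t : ℝ, HasDerivAt (fun t => u ^ 2 * (Real.exp t - 1) - 2 * t * C)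
        (u ^ 2 * Real.exp t - 2 * 1 * C) t := by
      intro t
      have h1 : HasDerivAt (fun t : ℝ => u ^ 2 * (Real.exp t - 1)) (u ^ 2 * Real.exp t) t :=
        ((Real.hasDerivAt_exp t).sub_const 1).const_mul (u ^ 2)
      have h2 : HasDerivAt (fun t : ℝ => 2 * t * C) (2 * 1 * C) t := by
        simpa using (((hasDerivAt_id t).const_mul 2).mul_const C)
      exact h1.sub h2
    intro w hw
    have hmain := aux_mono hd (a := u) (fun t ht => by
        have h3 := auxA3 hu
        have hexp : Real.exp u ≤ Real.exp t := Real.exp_le_exp.2 ht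
        have hsq : 0 ≤ u ^ 2 := sq_nonneg u
        simp only [hC]
        nlinarith [mul_le_mul_of_nonneg_left hexp hsq]) w hw
    have hbase : 0 ≤ u ^ 2 * (Real.exp u - 1) - 2 * u * C := by
      have h2 := auxA2 hu
      simp only [hC]
      nlinarith
    linarith
  -- step 2 : integrate up from u to v
  have hd2 : ∀ t : ℝ, HasDerivAt (fun t => u ^ 2 * (Real.exp t - 1 - t) - t ^ 2 * C)
      ((u ^ 2 * (Real.exp t - 1) - 2 * t * C)) t := by
    intro t
    have h1 : HasDerivAt (fun t : ℝ => u ^ 2 * (Real.exp t - 1 - t)) (u ^ 2 * (Real.exp t - 1)) t := by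
      have := (((Real.hasDerivAt_exp t).sub_const 1).sub (hasDerivAt_id t)).const_mul (u ^ 2)
      simpa using this
    have h2 : HasDerivAt (fun t : ℝ => t ^ 2 * C) (2 * t * C) t := by
      have := (hasDerivAt_pow 2 t).mul_const C
      norm_num at this
      convert this using 1 <;> ring
    exact h1.sub h2
  have h := aux_mono hd2 (a := u) (fun t ht => hstep1 t ht) v huv
  have h' : 0 ≤ u ^ 2 * (Real.exp v - 1 - v) - v ^ 2 * C := by
    have hz : u ^ 2 * (Real.exp u - 1 - u) - u ^ 2 * C = 0 := by rw [hC]; ring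
    linarith
  linarith

/-- The key pointwise exponential inequality. -/
lemma auxA6 {l x b : ℝ} (hl : 0 ≤ l) (hb : 0 < b) (hx : |x| ≤ b) :
    Real.exp (l * x) ≤ 1 + l * x + (Real.exp (l * b) - 1 - l * b) / b ^ 2 * x ^ 2 := by
  rcases eq_or_lt_of_le hl with h0 | hl
  · simp [← h0]
  have hxb : x ≤ b := le_of_abs_le hx
  have hxb' : -b ≤ x := neg_le_of_abs_le hx
  set u := l * x with hu
  set v := l * b with hv
  have hvpos : 0 < v := mul_pos hl hb
  have huv : u ≤ v := by apply mul_le_mul_of_nonneg_left hxb hl.le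
  have hmain : v ^ 2 * (Real.exp u - 1 - u) ≤ u ^ 2 * (Real.exp v - 1 - v) := by
    rcases le_or_gt 0 u with hu0 | hu0
    · exact auxA5 hu0 huv
    · have h1 : Real.exp u - 1 - u ≤ u ^ 2 / 2 := by have := auxA4b hu0.le; linarith
      have h2 : v ^ 2 / 2 ≤ Real.exp v - 1 - v := by have := auxA4a hvpos.le; linarith
      nlinarith [sq_nonneg u, sq_nonneg v, sq_nonneg (u*v)]
  -- now convert
  have hb2 : (0:ℝ) < b ^ 2 := by positivity
  have hxu : u ^ 2 = l ^ 2 * x ^ 2 := by rw [hu]; ring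
  have hvb : v ^ 2 = l ^ 2 * b ^ 2 := by rw [hv]; ring
  have hl2 : (0:ℝ) < l ^ 2 := by positivity
  have hgoal : Real.exp u - 1 - u ≤ (Real.exp v - 1 - v) * x ^ 2 / b ^ 2 := by
    rw [le_div_iff₀ hb2]
    have h2 : (l ^ 2) * ((Real.exp u - 1 - u) * b ^ 2) ≤ (l ^ 2) * ((Real.exp v - 1 - v) * x ^ 2) := by
      rw [hxu, hvb] at hmain
      linear_combination hmain
    exact le_of_mul_le_mul_left h2 hl2
  rw [div_mul_eq_mul_div]
  linarith

/-- Bernstein-type bound on `exp v - 1 - v`. -/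
lemma auxA7 {v : ℝ} (hv : 0 ≤ v) : (1 - v / 3) * (Real.exp v - 1 - v) ≤ v ^ 2 / 2 := by
  have hd : ∀ t : ℝ, HasDerivAt (fun t => t ^ 2 / 2 - (1 - t / 3) * (Real.exp t - 1 - t))
      ((2 : ℕ) * t ^ 1 / 2 - ((0 - 1 / 3) * (Real.exp t - 1 - t) + (1 - t / 3) * (Real.exp t - 1))) t := by
    intro t
    have h1 : HasDerivAt (fun t : ℝ => Real.exp t - 1 - t) (Real.exp t - 1) t := by
      have := ((Real.hasDerivAt_exp t).sub_const 1).sub (hasDerivAt_id t)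
      exact this
    exact ((hasDerivAt_pow 2 t).div_const 2).sub
      (((hasDerivAt_const t 1).sub ((hasDerivAt_id t).div_const 3)).mul h1)
  have h := aux_mono hd (a := 0) (fun t ht => by
      have h2 := auxA2 ht
      have h1 := Real.add_one_le_exp t
      push_cast
      nlinarith) v hv
  norm_num at h
  linarith

lemma bucket0 {L U y : ℝ} (hL : 0.3 ≤ L) (hU0 : 0 ≤ U) (hU1 : U ≤ 1)
    (hy : Real.sqrt (4 * U * L + 5 * L ^ 2) ≤ y) :
    L ≤ 1 * y - (Real.exp (1:ℝ) - 1 - 1) * U := by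
  have hE1 : Real.exp 1 < 2.7182818286 := Real.exp_one_lt_d9
  have hE2 : (2.7182818283 : ℝ) < Real.exp 1 := Real.exp_one_gt_d9
  have hkey : (Real.exp 1 - 2) * U + L ≤ Real.sqrt (4 * U * L + 5 * L ^ 2) := by
    have h0 : 0 ≤ (Real.exp 1 - 2) * U + L := by nlinarith
    have h2 : ((Real.exp 1 - 2) * U + L) ^ 2 ≤ 4 * U * L + 5 * L ^ 2 := by
      have hUU : U ^ 2 ≤ U := by nlinarith
      have hco : (Real.exp 1 - 2) ^ 2 + 2 * (Real.exp 1 - 2) * L - 4 * L ≤ 0 := by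
        nlinarith [hE1, hE2, hL]
      nlinarith [mul_le_mul_of_nonneg_left hUU (sq_nonneg (Real.exp 1 - 2)),
        mul_nonneg hU0 (neg_nonneg.2 hco)]
    calc (Real.exp 1 - 2) * U + L = Real.sqrt (((Real.exp 1 - 2) * U + L) ^ 2) :=
          (Real.sqrt_sq h0).symm
      _ ≤ _ := Real.sqrt_le_sqrt h2
  linarith [hkey.trans hy]

set_option maxHeartbeats 1000000 in
lemma bucketk {K L U y s lam : ℝ} (hK : 1 ≤ K) (hL : 0.3 ≤ L) (hUk : K ≤ U) (hU1 : U ≤ K + 1)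
    (hs : s = Real.sqrt (4 * K * L + 5 * L ^ 2)) (hlam : lam = s / (K + 1 + s / 3))
    (hy : Real.sqrt (4 * U * L + 5 * L ^ 2) ≤ y) :
    L ≤ lam * y - (Real.exp lam - 1 - lam) * U := by
  have hLpos : (0:ℝ) < L := by linarith
  have harg : (0:ℝ) ≤ 4 * K * L + 5 * L ^ 2 := by nlinarith
  have hs2 : s ^ 2 = 4 * K * L + 5 * L ^ 2 := by rw [hs]; exact Real.sq_sqrt harg
  have hspos : 0 < s := by
    rw [hs]; apply Real.sqrt_pos.2; nlinarith
  have hd : (0:ℝ) < K + 1 + s / 3 := by linarith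
  have hlpos : 0 < lam := by rw [hlam]; positivity
  have hld : lam * (K + 1 + s / 3) = s := by rw [hlam]; field_simp
  have hphi0 : 0 ≤ Real.exp lam - 1 - lam := by
    have := Real.add_one_le_exp lam; linarith
  have h7 := auxA7 hlpos.le
  have e1 : (1 - lam / 3) * (K + 1 + s / 3) = K + 1 := by linear_combination (-1/3) * hld
  have e2 : lam ^ 2 * (K + 1 + s / 3) ^ 2 = s ^ 2 := by
    linear_combination (lam * (K + 1 + s / 3) + s) * hld
  have hphiB : (Real.exp lam - 1 - lam) * (2 * (K + 1) * (K + 1 + s / 3)) ≤ s ^ 2 := by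
    calc (Real.exp lam - 1 - lam) * (2 * (K + 1) * (K + 1 + s / 3))
        = ((1 - lam / 3) * (Real.exp lam - 1 - lam)) * (2 * (K + 1 + s / 3) ^ 2) := by
          linear_combination (-2 * (Real.exp lam - 1 - lam) * (K + 1 + s / 3)) * e1
      _ ≤ lam ^ 2 / 2 * (2 * (K + 1 + s / 3) ^ 2) :=
          mul_le_mul_of_nonneg_right h7 (by positivity)
      _ = s ^ 2 := by linear_combination e2
  have hys : s ≤ y := by
    rw [hs]
    have hKU : 4 * K * L + 5 * L ^ 2 ≤ 4 * U * L + 5 * L ^ 2 := by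
      nlinarith [mul_le_mul_of_nonneg_right hUk hLpos.le]
    exact (Real.sqrt_le_sqrt hKU).trans hy
  have hsle : s ≤ 3 / 2 * (2 * K - 2 + 5 * L) := by
    have hpos : (0:ℝ) ≤ 3 / 2 * (2 * K - 2 + 5 * L) := by nlinarith
    calc s = Real.sqrt (s ^ 2) := (Real.sqrt_sq hspos.le).symm
      _ ≤ Real.sqrt ((3 / 2 * (2 * K - 2 + 5 * L)) ^ 2) := by
          apply Real.sqrt_le_sqrt
          rw [hs2]
          nlinarith [sq_nonneg (K - 1), mul_nonneg (sub_nonneg.2 hK) hLpos.le]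
      _ = 3 / 2 * (2 * K - 2 + 5 * L) := Real.sqrt_sq hpos
  have hmain : L * (2 * (K + 1 + s / 3)) ≤ s ^ 2 := by
    rw [hs2]
    nlinarith [mul_le_mul_of_nonneg_left hsle (by positivity : (0:ℝ) ≤ 2 * L / 3)]
  have t1' : lam * s * (2 * (K + 1 + s / 3)) ≤ lam * y * (2 * (K + 1 + s / 3)) :=
    mul_le_mul_of_nonneg_right (mul_le_mul_of_nonneg_left hys hlpos.le) (by positivity)
  have t2' : (Real.exp lam - 1 - lam) * U * (2 * (K + 1 + s / 3))
      ≤ (Real.exp lam - 1 - lam) * (K + 1) * (2 * (K + 1 + s / 3)) :=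
    mul_le_mul_of_nonneg_right (mul_le_mul_of_nonneg_left hU1 hphi0) (by positivity)
  have hls : lam * s * (2 * (K + 1 + s / 3)) = 2 * s ^ 2 := by
    linear_combination (2 * s) * hld
  have hfinal : L * (2 * (K + 1 + s / 3))
      ≤ (lam * y - (Real.exp lam - 1 - lam) * U) * (2 * (K + 1 + s / 3)) := by
    linarith [t1', t2', hphiB, hmain, hls]
  exact le_of_mul_le_mul_right hfinal (by positivity)

lemma markov_arith {L : ℝ} (hL : 0 ≤ L) (h7 : 0.7 ≤ Real.exp (-L)) :
    1 ≤ Real.exp (-L) * (1 + Real.sqrt 5 * L) := by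
  have h1 : 1 - L ≤ Real.exp (-L) := by have := Real.add_one_le_exp (-L); linarith
  have hinv : Real.exp L * Real.exp (-L) = 1 := by rw [← Real.exp_add]; simp
  have hL37 : L ≤ 3 / 7 := by
    have h2 := Real.add_one_le_exp L
    nlinarith [Real.exp_pos L]
  have hsq : Real.sqrt 5 ^ 2 = 5 := Real.sq_sqrt (by norm_num)
  have h22 : (2.2:ℝ) ≤ Real.sqrt 5 := by
    have : ((2.2:ℝ)) = Real.sqrt (2.2 ^ 2) := (Real.sqrt_sq (by norm_num)).symm
    rw [this]; apply Real.sqrt_le_sqrt; norm_num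
  have h23 : Real.sqrt 5 ≤ 3 := by
    have : (3:ℝ) = Real.sqrt (3 ^ 2) := (Real.sqrt_sq (by norm_num)).symm
    rw [this]; apply Real.sqrt_le_sqrt; norm_num
  have hfac : (0:ℝ) ≤ 1 + Real.sqrt 5 * L := by nlinarith
  have hmul : (1 - L) * (1 + Real.sqrt 5 * L) ≤ Real.exp (-L) * (1 + Real.sqrt 5 * L) :=
    mul_le_mul_of_nonneg_right h1 hfac
  have hin : (0:ℝ) ≤ Real.sqrt 5 * (1 - L) - 1 := by
    nlinarith [mul_le_mul_of_nonneg_right h22 (by linarith : (0:ℝ) ≤ 1 - L)]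
  nlinarith [mul_nonneg hL hin, hmul]

end auxiliary


lemma aux_integrable {Ω : Type*} [MeasureSpace Ω] [IsProbabilityMeasure (ℙ : Measure Ω)]
    {f : Ω → ℝ} {C : ℝ} (hf : Measurable f) (hC : ∀ᵐ ω ∂ℙ, |f ω| ≤ C) :
    Integrable f ℙ :=
  ⟨hf.aestronglyMeasurable, HasFiniteIntegral.of_bounded (C := C) (by
    filter_upwards [hC] with ω h using by simpa using h)⟩

lemma core {Ω : Type*} [MeasureSpace Ω] [IsProbabilityMeasure (ℙ : Measure Ω)]
    (n : ℕ) (F : ℕ → MeasurableSpace Ω) (hFmono : Monotone F)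
    (hFle : ∀ t, F t ≤ (MeasureSpace.toMeasurableSpace : MeasurableSpace Ω))
    (X : ℕ → Ω → ℝ) (b : ℝ) (hb : 0 < b)
    (hXmeas : ∀ t ∈ Finset.Icc 1 n, Measurable[F t] (X t))
    (hcond : ∀ t ∈ Finset.Icc 1 n, ℙ[X t | F (t - 1)] =ᵐ[ℙ] 0)
    (hXbdd : ∀ t ∈ Finset.Icc 1 n, ∀ ω, |X t ω| ≤ b)
    (l : ℝ) (hl : 0 ≤ l) :
    ∫ ω, Real.exp (l * (∑ t ∈ Finset.Icc 1 n, X t ω)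
      - (Real.exp (l * b) - 1 - l * b) / b ^ 2
        * (∑ t ∈ Finset.Icc 1 n, (ℙ[fun ω' => (X t ω') ^ 2 | F (t - 1)]) ω)) ∂ℙ ≤ 1 := by
  have hc0 : 0 ≤ (Real.exp (l * b) - 1 - l * b) / b ^ 2 := by
    apply div_nonneg
    · have := Real.add_one_le_exp (l * b); linarith
    · positivity
  set c : ℝ := (Real.exp (l * b) - 1 - l * b) / b ^ 2 with hcdef
  induction n with
  | zero =>
    have : Finset.Icc 1 0 = (∅ : Finset ℕ) := by simp
    simp [this]
  | succ m ih =>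
    -- restricted hypotheses
    have hsub : ∀ t : ℕ, t ∈ Finset.Icc 1 m → t ∈ Finset.Icc 1 (m + 1) := by
      intro t ht; simp only [Finset.mem_Icc] at *; omega
    have IH := ih (fun t ht => hXmeas t (hsub t ht)) (fun t ht => hcond t (hsub t ht))
      (fun t ht => hXbdd t (hsub t ht))
    have htmem : m + 1 ∈ Finset.Icc 1 (m + 1) := by simp
    have hmF := hFle m
    -- notation
    set S : Ω → ℝ := fun ω => ∑ t ∈ Finset.Icc 1 m, X t ω with hSdef
    set V : Ω → ℝ := fun ω => ∑ t ∈ Finset.Icc 1 m, (ℙ[fun ω' => (X t ω') ^ 2 | F (t - 1)]) ω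
      with hVdef
    set W : Ω → ℝ := ℙ[fun ω' => (X (m + 1) ω') ^ 2 | F m] with hWdef
    set G : Ω → ℝ := fun ω => Real.exp (l * S ω - c * V ω - c * W ω) with hGdef
    -- decomposition of the exponent
    have hsum : ∀ ω, l * (∑ t ∈ Finset.Icc 1 (m + 1), X t ω)
        - c * (∑ t ∈ Finset.Icc 1 (m + 1), (ℙ[fun ω' => (X t ω') ^ 2 | F (t - 1)]) ω)
        = (l * S ω - c * V ω - c * W ω) + l * X (m + 1) ω := by
      intro ω
      rw [Finset.sum_Icc_succ_top (by omega : 1 ≤ m + 1),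
        Finset.sum_Icc_succ_top (by omega : 1 ≤ m + 1)]
      simp only [Nat.add_sub_cancel, hSdef, hVdef, hWdef]
      ring
    -- basic facts about X (m+1)
    have hXt_measF : Measurable[F (m + 1)] (X (m + 1)) := hXmeas (m + 1) htmem
    have hXt_meas : Measurable (X (m + 1)) := hXt_measF.mono (hFle (m + 1)) le_rfl
    have hXt_bdd : ∀ ω, |X (m + 1) ω| ≤ b := hXbdd (m + 1) htmem
    have hXt_int : Integrable (X (m + 1)) ℙ :=
      aux_integrable hXt_meas (Filter.Eventually.of_forall hXt_bdd)
    have hXt2_int : Integrable (fun ω => (X (m + 1) ω) ^ 2) ℙ := by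
      refine aux_integrable (C := b ^ 2) (hXt_meas.pow_const 2) (Filter.Eventually.of_forall fun ω => ?_)
      calc |X (m + 1) ω ^ 2| = |X (m + 1) ω| ^ 2 := abs_pow _ _
        _ ≤ b ^ 2 := pow_le_pow_left₀ (abs_nonneg _) (hXt_bdd ω) 2
    -- measurability
    have hS_measF : Measurable[F m] S := by
      apply Finset.measurable_sum
      intro t ht
      have ht' : t ≤ m := (Finset.mem_Icc.1 ht).2
      exact (hXmeas t (hsub t ht)).mono (hFmono ht') le_rfl
    have hV_measF : Measurable[F m] V := by
      apply Finset.measurable_sum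
      intro t ht
      have ht' : t - 1 ≤ m := by
        have := (Finset.mem_Icc.1 ht).2; omega
      exact (stronglyMeasurable_condExp.mono (hFmono ht')).measurable
    have hW_measF : Measurable[F m] W := stronglyMeasurable_condExp.measurable
    have hG_measF : Measurable[F m] G := by
      apply Measurable.comp (f := fun ω => l * S ω - c * V ω - c * W ω)
        (g := Real.exp) Real.measurable_exp
      exact ((hS_measF.const_mul l).sub (hV_measF.const_mul c)).sub (hW_measF.const_mul c)
    have hG_sm : StronglyMeasurable[F m] G := hG_measF.stronglyMeasurable
    have hG_meas : Measurable G := hG_measF.mono hmF le_rfl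
    -- nonnegativity facts
    have hV_nonneg : ∀ᵐ ω ∂ℙ, 0 ≤ V ω := by
      have h : ∀ᵐ ω ∂ℙ, ∀ t ∈ Finset.Icc 1 m, 0 ≤ (ℙ[fun ω' => (X t ω') ^ 2 | F (t - 1)]) ω := by
        rw [Filter.eventually_all_finset]
        intro t _
        exact condExp_nonneg (Filter.Eventually.of_forall fun ω => sq_nonneg _)
      filter_upwards [h] with ω hω
      exact Finset.sum_nonneg hω
    have hW_nonneg : ∀ᵐ ω ∂ℙ, 0 ≤ W ω :=
      condExp_nonneg (Filter.Eventually.of_forall fun ω => sq_nonneg _)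
    have hW_le : ∀ᵐ ω ∂ℙ, W ω ≤ b ^ 2 := by
      have h1 : (fun ω' => (X (m + 1) ω') ^ 2) ≤ᵐ[ℙ] fun _ => b ^ 2 := by
        refine Filter.Eventually.of_forall fun ω => ?_
        calc (X (m + 1) ω) ^ 2 = |X (m + 1) ω| ^ 2 := (sq_abs _).symm
          _ ≤ b ^ 2 := pow_le_pow_left₀ (abs_nonneg _) (hXt_bdd ω) 2
      have h2 := condExp_mono (m := F m) hXt2_int (integrable_const (b ^ 2)) h1
      have h3 : ℙ[(fun _ => b ^ 2 : Ω → ℝ) | F m] = fun _ => b ^ 2 := condExp_const hmF _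
      filter_upwards [h2] with ω hω
      rw [h3] at hω
      exact hω
    -- bound on S
    have hS_bdd : ∀ ω, |S ω| ≤ m * b := by
      intro ω
      calc |S ω| ≤ ∑ t ∈ Finset.Icc 1 m, |X t ω| := Finset.abs_sum_le_sum_abs _ _
        _ ≤ ∑ _t ∈ Finset.Icc 1 m, b := Finset.sum_le_sum fun t ht => hXbdd t (hsub t ht) ω
        _ = m * b := by rw [Finset.sum_const, Nat.card_Icc]; simp [mul_comm]
    -- bound on G
    have hG_nonneg : ∀ ω, 0 ≤ G ω := fun ω => (Real.exp_pos _).le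
    have hG_bdd : ∀ᵐ ω ∂ℙ, |G ω| ≤ Real.exp (l * (m * b)) := by
      filter_upwards [hV_nonneg, hW_nonneg] with ω h1 h2
      rw [abs_of_nonneg (hG_nonneg ω), hGdef]
      apply Real.exp_le_exp.2
      have hls : l * S ω ≤ l * (m * b) :=
        mul_le_mul_of_nonneg_left (le_of_abs_le (hS_bdd ω)) hl
      nlinarith [mul_nonneg hc0 h1, mul_nonneg hc0 h2]
    have hG_int : Integrable G ℙ := aux_integrable hG_meas hG_bdd
    -- integrability of the various products
    have hGX_int : Integrable (fun ω => G ω * X (m + 1) ω) ℙ := by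
      refine aux_integrable (C := Real.exp (l * (m * b)) * b) (hG_meas.mul hXt_meas) ?_
      filter_upwards [hG_bdd] with ω h
      rw [abs_mul]
      exact mul_le_mul h (hXt_bdd ω) (abs_nonneg _) (Real.exp_pos _).le
    have hGX2_int : Integrable (fun ω => G ω * (X (m + 1) ω) ^ 2) ℙ := by
      refine aux_integrable (C := Real.exp (l * (m * b)) * b ^ 2) (hG_meas.mul (hXt_meas.pow_const 2)) ?_
      filter_upwards [hG_bdd] with ω h
      rw [abs_mul]
      refine mul_le_mul h ?_ (abs_nonneg _) (Real.exp_pos _).le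
      calc |X (m + 1) ω ^ 2| = |X (m + 1) ω| ^ 2 := abs_pow _ _
        _ ≤ b ^ 2 := pow_le_pow_left₀ (abs_nonneg _) (hXt_bdd ω) 2
    have hGW_int : Integrable (fun ω => G ω * W ω) ℙ := by
      refine aux_integrable (C := Real.exp (l * (m * b)) * b ^ 2) (hG_meas.mul (hW_measF.mono hmF le_rfl)) ?_
      filter_upwards [hG_bdd, hW_nonneg, hW_le] with ω h h1 h2
      rw [abs_mul, abs_of_nonneg h1]
      exact mul_le_mul h h2 h1 (Real.exp_pos _).le
    have hGeX_int : Integrable (fun ω => G ω * Real.exp (l * X (m + 1) ω)) ℙ := by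
      refine aux_integrable (C := Real.exp (l * (m * b)) * Real.exp (l * b)) (hG_meas.mul (Real.measurable_exp.comp (hXt_meas.const_mul l))) ?_
      filter_upwards [hG_bdd] with ω h
      rw [abs_mul, abs_of_nonneg (Real.exp_pos (l * X (m + 1) ω)).le]
      refine mul_le_mul h (Real.exp_le_exp.2 ?_) (Real.exp_pos _).le (Real.exp_pos _).le
      exact mul_le_mul_of_nonneg_left (le_of_abs_le (hXt_bdd ω)) hl
    have hGpoly_int : Integrable (fun ω => G ω * (1 + l * X (m + 1) ω + c * (X (m + 1) ω) ^ 2)) ℙ := by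
      have : (fun ω => G ω * (1 + l * X (m + 1) ω + c * (X (m + 1) ω) ^ 2))
          = fun ω => G ω + (l * (G ω * X (m + 1) ω) + c * (G ω * (X (m + 1) ω) ^ 2)) := by
        funext ω; ring
      rw [this]
      exact hG_int.add ((hGX_int.const_mul l).add (hGX2_int.const_mul c))
    have hG1cW_int : Integrable (fun ω => G ω * (1 + c * W ω)) ℙ := by
      have : (fun ω => G ω * (1 + c * W ω)) = fun ω => G ω + c * (G ω * W ω) := by
        funext ω; ring
      rw [this]
      exact hG_int.add (hGW_int.const_mul c)
    have hgm_int : Integrable (fun ω => Real.exp (l * S ω - c * V ω)) ℙ := by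
      refine aux_integrable (C := Real.exp (l * (m * b))) (Real.measurable_exp.comp
        (((hS_measF.mono hmF le_rfl).const_mul l).sub ((hV_measF.mono hmF le_rfl).const_mul c))) ?_
      filter_upwards [hV_nonneg] with ω h1
      rw [abs_of_nonneg (Real.exp_pos _).le]
      apply Real.exp_le_exp.2
      have hls : l * S ω ≤ l * (m * b) :=
        mul_le_mul_of_nonneg_left (le_of_abs_le (hS_bdd ω)) hl
      nlinarith [mul_nonneg hc0 h1]
    -- the two conditional expectation identities
    have hcond' : condExp (F m) ℙ (X (m + 1)) =ᵐ[ℙ] 0 := by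
      have := hcond (m + 1) htmem
      simpa using this
    have hpull1 : ∫ ω, G ω * X (m + 1) ω ∂ℙ = 0 := by
      have hpull := condExp_stronglyMeasurable_mul_of_bound hmF hG_sm hXt_int
        (Real.exp (l * (m * b))) (by filter_upwards [hG_bdd] with ω h using by simpa using h)
      calc ∫ ω, G ω * X (m + 1) ω ∂ℙ
          = ∫ ω, (condExp (F m) ℙ (G * X (m + 1))) ω ∂ℙ := (integral_condExp hmF).symm
        _ = ∫ ω, (G * condExp (F m) ℙ (X (m + 1))) ω ∂ℙ := integral_congr_ae hpull
        _ = ∫ ω, (0 : Ω → ℝ) ω ∂ℙ := by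
            apply integral_congr_ae
            filter_upwards [hcond'] with ω h
            simp only [Pi.mul_apply, Pi.zero_apply] at h ⊢
            rw [h, mul_zero]
        _ = 0 := by simp
    have hpull2 : ∫ ω, G ω * (X (m + 1) ω) ^ 2 ∂ℙ = ∫ ω, G ω * W ω ∂ℙ := by
      have hpull := condExp_stronglyMeasurable_mul_of_bound hmF hG_sm hXt2_int
        (Real.exp (l * (m * b))) (by filter_upwards [hG_bdd] with ω h using by simpa using h)
      calc ∫ ω, G ω * (X (m + 1) ω) ^ 2 ∂ℙ
          = ∫ ω, (condExp (F m) ℙ (G * fun ω' => (X (m + 1) ω') ^ 2)) ω ∂ℙ :=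
            (integral_condExp hmF).symm
        _ = ∫ ω, (G * condExp (F m) ℙ (fun ω' => (X (m + 1) ω') ^ 2)) ω ∂ℙ :=
            integral_congr_ae hpull
        _ = ∫ ω, G ω * W ω ∂ℙ := rfl
    -- the main chain of inequalities
    calc ∫ ω, Real.exp (l * (∑ t ∈ Finset.Icc 1 (m + 1), X t ω)
          - c * (∑ t ∈ Finset.Icc 1 (m + 1), (ℙ[fun ω' => (X t ω') ^ 2 | F (t - 1)]) ω)) ∂ℙ
        = ∫ ω, G ω * Real.exp (l * X (m + 1) ω) ∂ℙ := by
          apply integral_congr_ae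
          have hpt : ∀ ω, Real.exp (l * (∑ t ∈ Finset.Icc 1 (m + 1), X t ω)
              - c * (∑ t ∈ Finset.Icc 1 (m + 1), (ℙ[fun ω' => (X t ω') ^ 2 | F (t - 1)]) ω))
              = G ω * Real.exp (l * X (m + 1) ω) := by
            intro ω
            rw [hsum ω, Real.exp_add]
          exact Filter.Eventually.of_forall hpt
      _ ≤ ∫ ω, G ω * (1 + l * X (m + 1) ω + c * (X (m + 1) ω) ^ 2) ∂ℙ := by
          apply integral_mono_ae hGeX_int hGpoly_int
          refine Filter.Eventually.of_forall fun ω => ?_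
          apply mul_le_mul_of_nonneg_left _ (hG_nonneg ω)
          exact auxA6 hl hb (hXt_bdd ω)
      _ = ∫ ω, (G ω + (l * (G ω * X (m + 1) ω) + c * (G ω * (X (m + 1) ω) ^ 2))) ∂ℙ := by
          apply integral_congr_ae
          exact Filter.Eventually.of_forall fun ω => by ring
      _ = ∫ ω, G ω ∂ℙ + (l * ∫ ω, G ω * X (m + 1) ω ∂ℙ
            + c * ∫ ω, G ω * (X (m + 1) ω) ^ 2 ∂ℙ) := by
          have h1 : ∫ ω, (G ω + (l * (G ω * X (m + 1) ω) + c * (G ω * (X (m + 1) ω) ^ 2))) ∂ℙ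
              = ∫ ω, G ω ∂ℙ + ∫ ω, (l * (G ω * X (m + 1) ω) + c * (G ω * (X (m + 1) ω) ^ 2)) ∂ℙ :=
            integral_add hG_int ((hGX_int.const_mul l).add (hGX2_int.const_mul c))
          have h2 : ∫ ω, (l * (G ω * X (m + 1) ω) + c * (G ω * (X (m + 1) ω) ^ 2)) ∂ℙ
              = ∫ ω, l * (G ω * X (m + 1) ω) ∂ℙ + ∫ ω, c * (G ω * (X (m + 1) ω) ^ 2) ∂ℙ :=
            integral_add (hGX_int.const_mul l) (hGX2_int.const_mul c)
          have h3 : ∫ ω, l * (G ω * X (m + 1) ω) ∂ℙ = l * ∫ ω, G ω * X (m + 1) ω ∂ℙ :=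
            integral_const_mul l _
          have h4 : ∫ ω, c * (G ω * (X (m + 1) ω) ^ 2) ∂ℙ = c * ∫ ω, G ω * (X (m + 1) ω) ^ 2 ∂ℙ :=
            integral_const_mul c _
          rw [h1, h2, h3, h4]
      _ = ∫ ω, G ω ∂ℙ + c * ∫ ω, G ω * W ω ∂ℙ := by rw [hpull1, hpull2]; ring
      _ = ∫ ω, (G ω + c * (G ω * W ω)) ∂ℙ := by
          have h1 : ∫ ω, (G ω + c * (G ω * W ω)) ∂ℙ
              = ∫ ω, G ω ∂ℙ + ∫ ω, c * (G ω * W ω) ∂ℙ :=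
            integral_add hG_int (hGW_int.const_mul c)
          have h2 : ∫ ω, c * (G ω * W ω) ∂ℙ = c * ∫ ω, G ω * W ω ∂ℙ := integral_const_mul c _
          rw [h1, h2]
      _ = ∫ ω, G ω * (1 + c * W ω) ∂ℙ := by
          apply integral_congr_ae
          exact Filter.Eventually.of_forall fun ω => by ring
      _ ≤ ∫ ω, Real.exp (l * S ω - c * V ω) ∂ℙ := by
          apply integral_mono_ae hG1cW_int hgm_int
          refine Filter.Eventually.of_forall fun ω => ?_
          have h1 : 1 + c * W ω ≤ Real.exp (c * W ω) := by
            have := Real.add_one_le_exp (c * W ω); linarith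
          calc G ω * (1 + c * W ω) ≤ G ω * Real.exp (c * W ω) :=
                mul_le_mul_of_nonneg_left h1 (hG_nonneg ω)
            _ = Real.exp (l * S ω - c * V ω) := by
                rw [hGdef]
                rw [← Real.exp_add]
                congr 1
                ring
      _ ≤ 1 := IH

set_option maxHeartbeats 2000000 in
theorem stmt_5 {Ω : Type*} [MeasureSpace Ω] [IsProbabilityMeasure (ℙ : Measure Ω)]
    (n : ℕ) (F : ℕ → MeasurableSpace Ω) (hFmono : Monotone F)
    (hFle : ∀ t, F t ≤ (MeasureSpace.toMeasurableSpace : MeasurableSpace Ω))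
    (X : ℕ → Ω → ℝ) (b : ℝ) (hb : 0 < b)
    (hXmeas : ∀ t ∈ Finset.Icc 1 n, Measurable[F t] (X t))
    (hcond : ∀ t ∈ Finset.Icc 1 n, ℙ[X t | F (t - 1)] =ᵐ[ℙ] 0)
    (hXbdd : ∀ t ∈ Finset.Icc 1 n, ∀ ω, |X t ω| ≤ b)
    (Vn : Ω → ℝ)
    (hVn : Vn = fun ω => ∑ t ∈ Finset.Icc 1 n, (ℙ[fun ω' => (X t ω') ^ 2 | F (t - 1)]) ω)
    (δ : ℝ) (hδ : 0 < δ) :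
    1 - δ ≤ (ℙ {ω | ∑ t ∈ Finset.Icc 1 n, X t ω
        ≤ Real.sqrt (4 * Vn ω * Real.log (n / δ)
            + 5 * b ^ 2 * (Real.log (n / δ)) ^ 2)}).toReal := by
  classical
  -- trivial case : δ ≥ 1
  rcases le_or_gt 1 δ with hδ1 | hδ1
  · exact le_trans (by linarith) ENNReal.toReal_nonneg
  -- trivial case : n = 0
  rcases Nat.eq_zero_or_pos n with hn0 | hn1
  · subst hn0
    have hempty : Finset.Icc 1 0 = (∅ : Finset ℕ) := by simp
    have : {ω : Ω | ∑ t ∈ Finset.Icc 1 0, X t ω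
        ≤ Real.sqrt (4 * Vn ω * Real.log ((0:ℕ) / δ)
            + 5 * b ^ 2 * (Real.log ((0:ℕ) / δ)) ^ 2)} = Set.univ := by
      ext ω
      simp only [Set.mem_setOf_eq, Set.mem_univ, iff_true, hempty, Finset.sum_empty]
      have : ((0:ℕ):ℝ) / δ = 0 := by simp
      rw [this, Real.log_zero]
      simp [Real.sqrt_nonneg]
    rw [this]
    simp only [measure_univ, ENNReal.toReal_one]
    linarith
  -- main case
  set L : ℝ := Real.log (n / δ) with hLdef
  have hn1R : (1:ℝ) ≤ n := by exact_mod_cast hn1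
  have hnpos : (0:ℝ) < n := by linarith
  have hndpos : (0:ℝ) < n / δ := by positivity
  have hLpos : 0 < L := Real.log_pos (by rw [lt_div_iff₀ hδ]; nlinarith)
  have hexpL : Real.exp (-L) = δ / n := by
    rw [Real.exp_neg, Real.exp_log hndpos, inv_div]
  -- measurability of the basic objects
  have hXmeas' : ∀ t ∈ Finset.Icc 1 n, Measurable (X t) :=
    fun t ht => (hXmeas t ht).mono (hFle t) le_rfl
  have hS_meas : Measurable (fun ω => ∑ t ∈ Finset.Icc 1 n, X t ω) :=
    Finset.measurable_sum _ fun t ht => hXmeas' t ht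
  have hVn_meas : Measurable Vn := by
    rw [hVn]
    apply Finset.measurable_sum
    intro t _
    exact (stronglyMeasurable_condExp.mono (hFle (t - 1))).measurable
  have hgood_meas : MeasurableSet {ω : Ω | ∑ t ∈ Finset.Icc 1 n, X t ω
      ≤ Real.sqrt (4 * Vn ω * L + 5 * b ^ 2 * L ^ 2)} := by
    apply measurableSet_le hS_meas
    apply Measurable.comp Real.continuous_sqrt.measurable
    exact ((hVn_meas.const_mul 4).mul_const L).add_const _
  -- a.e. bounds on Vn
  have hV0 : ∀ᵐ ω ∂ℙ, 0 ≤ Vn ω := by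
    have h : ∀ᵐ ω ∂ℙ, ∀ t ∈ Finset.Icc 1 n, 0 ≤ (ℙ[fun ω' => (X t ω') ^ 2 | F (t - 1)]) ω := by
      rw [Filter.eventually_all_finset]
      intro t _
      exact condExp_nonneg (Filter.Eventually.of_forall fun ω => sq_nonneg _)
    filter_upwards [h] with ω hω
    rw [hVn]
    exact Finset.sum_nonneg hω
  have hVle : ∀ᵐ ω ∂ℙ, Vn ω ≤ n * b ^ 2 := by
    have h : ∀ᵐ ω ∂ℙ, ∀ t ∈ Finset.Icc 1 n,
        (ℙ[fun ω' => (X t ω') ^ 2 | F (t - 1)]) ω ≤ b ^ 2 := by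
      rw [Filter.eventually_all_finset]
      intro t ht
      have hX2int : Integrable (fun ω => (X t ω) ^ 2) ℙ := by
        refine aux_integrable (C := b ^ 2) ((hXmeas' t ht).pow_const 2)
          (Filter.Eventually.of_forall fun ω => ?_)
        calc |X t ω ^ 2| = |X t ω| ^ 2 := abs_pow _ _
          _ ≤ b ^ 2 := pow_le_pow_left₀ (abs_nonneg _) (hXbdd t ht ω) 2
      have h2 := condExp_mono (m := F (t - 1)) hX2int (integrable_const (b ^ 2))
        (Filter.Eventually.of_forall fun ω => by
          calc (X t ω) ^ 2 = |X t ω| ^ 2 := (sq_abs _).symm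
            _ ≤ b ^ 2 := pow_le_pow_left₀ (abs_nonneg _) (hXbdd t ht ω) 2)
      have h3 : ℙ[(fun _ => b ^ 2 : Ω → ℝ) | F (t - 1)] = fun _ => b ^ 2 :=
        condExp_const (hFle (t - 1)) _
      filter_upwards [h2] with ω hω
      rw [h3] at hω
      exact hω
    filter_upwards [h] with ω hω
    rw [hVn]
    calc ∑ t ∈ Finset.Icc 1 n, (ℙ[fun ω' => (X t ω') ^ 2 | F (t - 1)]) ω
        ≤ ∑ _t ∈ Finset.Icc 1 n, b ^ 2 := Finset.sum_le_sum hω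
      _ = n * b ^ 2 := by rw [Finset.sum_const, Nat.card_Icc]; simp [mul_comm]
  -- suffices to bound the complement
  suffices hbad : ℙ {ω : Ω | ∑ t ∈ Finset.Icc 1 n, X t ω
      ≤ Real.sqrt (4 * Vn ω * L + 5 * b ^ 2 * L ^ 2)}ᶜ ≤ ENNReal.ofReal δ by
    have h2 := prob_add_prob_compl (μ := ℙ) hgood_meas
    have h3 : (ℙ {ω : Ω | ∑ t ∈ Finset.Icc 1 n, X t ω
        ≤ Real.sqrt (4 * Vn ω * L + 5 * b ^ 2 * L ^ 2)}).toReal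
        + (ℙ {ω : Ω | ∑ t ∈ Finset.Icc 1 n, X t ω
        ≤ Real.sqrt (4 * Vn ω * L + 5 * b ^ 2 * L ^ 2)}ᶜ).toReal = 1 := by
      rw [← ENNReal.toReal_add (measure_ne_top _ _) (measure_ne_top _ _), h2]
      simp
    have h4 : (ℙ {ω : Ω | ∑ t ∈ Finset.Icc 1 n, X t ω
        ≤ Real.sqrt (4 * Vn ω * L + 5 * b ^ 2 * L ^ 2)}ᶜ).toReal ≤ δ := by
      have := ENNReal.toReal_mono (by simp) hbad
      rwa [ENNReal.toReal_ofReal hδ.le] at this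
    linarith
  -- Chernoff bound
  have hS_bdd : ∀ ω, |∑ t ∈ Finset.Icc 1 n, X t ω| ≤ n * b := by
    intro ω
    calc |∑ t ∈ Finset.Icc 1 n, X t ω| ≤ ∑ t ∈ Finset.Icc 1 n, |X t ω| :=
          Finset.abs_sum_le_sum_abs _ _
      _ ≤ ∑ _t ∈ Finset.Icc 1 n, b := Finset.sum_le_sum fun t ht => hXbdd t ht ω
      _ = n * b := by rw [Finset.sum_const, Nat.card_Icc]; simp [mul_comm]
  have chernoff : ∀ lam' : ℝ, 0 < lam' →
      ℙ {ω : Ω | L ≤ lam' / b * (∑ t ∈ Finset.Icc 1 n, X t ω)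
          - (Real.exp lam' - 1 - lam') / b ^ 2 * Vn ω} ≤ ENNReal.ofReal (δ / n) := by
    intro lam' hlam'
    set l : ℝ := lam' / b with hldef
    have hl0 : 0 ≤ l := by positivity
    have hlb : l * b = lam' := div_mul_cancel₀ _ hb.ne'
    have hc0 : 0 ≤ (Real.exp lam' - 1 - lam') / b ^ 2 := by
      apply div_nonneg
      · have := Real.add_one_le_exp lam'; linarith
      · positivity
    set Z : Ω → ℝ := fun ω => l * (∑ t ∈ Finset.Icc 1 n, X t ω)
        - (Real.exp lam' - 1 - lam') / b ^ 2 * Vn ω with hZdef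
    have hZ_meas : Measurable Z :=
      (hS_meas.const_mul l).sub (hVn_meas.const_mul _)
    have hZint : Integrable (fun ω => Real.exp (Z ω)) ℙ := by
      refine aux_integrable (C := Real.exp (l * (n * b)))
        (Real.measurable_exp.comp hZ_meas) ?_
      filter_upwards [hV0] with ω h0
      rw [abs_of_nonneg (Real.exp_pos _).le]
      apply Real.exp_le_exp.2
      rw [hZdef]
      have h1 : l * (∑ t ∈ Finset.Icc 1 n, X t ω) ≤ l * (n * b) :=
        mul_le_mul_of_nonneg_left (le_of_abs_le (hS_bdd ω)) hl0
      nlinarith [mul_nonneg hc0 h0]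
    have hcore' : ∫ ω, Real.exp (Z ω) ∂ℙ ≤ 1 := by
      have heq : (fun ω => Real.exp (Z ω)) = fun ω => Real.exp (l * (∑ t ∈ Finset.Icc 1 n, X t ω)
          - (Real.exp (l * b) - 1 - l * b) / b ^ 2
            * (∑ t ∈ Finset.Icc 1 n, (ℙ[fun ω' => (X t ω') ^ 2 | F (t - 1)]) ω)) := by
        funext ω
        rw [hZdef, hlb, hVn]
      rw [heq]
      exact core n F hFmono hFle X b hb hXmeas hcond hXbdd l hl0
    have hmarkov := mul_meas_ge_le_integral_of_nonneg
      (Filter.Eventually.of_forall fun ω => (Real.exp_pos (Z ω)).le) hZint (Real.exp L)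
    have hseteq : {ω : Ω | Real.exp L ≤ Real.exp (Z ω)} = {ω : Ω | L ≤ Z ω} := by
      ext ω; simp [Real.exp_le_exp]
    rw [hseteq] at hmarkov
    have htoReal : (ℙ {ω : Ω | L ≤ Z ω}).toReal ≤ δ / n := by
      rw [← hexpL, Real.exp_neg]
      rw [inv_eq_one_div, le_div_iff₀ (Real.exp_pos L)]
      calc (ℙ {ω : Ω | L ≤ Z ω}).toReal * Real.exp L
          = Real.exp L * (ℙ {ω : Ω | L ≤ Z ω}).toReal := by ring
        _ ≤ ∫ ω, Real.exp (Z ω) ∂ℙ := hmarkov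
        _ ≤ 1 := hcore'
    exact (ENNReal.le_ofReal_iff_toReal_le (measure_ne_top _ _) (by positivity)).2 htoReal
  -- split into the Markov case and the bucket case
  by_cases hsplit : n = 1 ∧ 0.7 < δ
  · -- Markov case
    obtain ⟨hn1', hδ7⟩ := hsplit
    subst hn1'
    have hexpL1 : Real.exp (-L) = δ := by rw [hexpL]; simp
    have h7' : (0.7:ℝ) ≤ Real.exp (-L) := by rw [hexpL1]; linarith
    have hX1mem : 1 ∈ Finset.Icc 1 1 := by simp
    have hX1int : Integrable (X 1) ℙ :=
      aux_integrable (C := b) (hXmeas' 1 hX1mem) (Filter.Eventually.of_forall (hXbdd 1 hX1mem))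
    have hEX1 : ∫ ω, X 1 ω ∂ℙ = 0 := by
      calc ∫ ω, X 1 ω ∂ℙ = ∫ ω, (condExp (F 0) ℙ (X 1)) ω ∂ℙ := (integral_condExp (hFle 0)).symm
        _ = ∫ ω, (0 : Ω → ℝ) ω ∂ℙ := integral_congr_ae (by simpa using hcond 1 hX1mem)
        _ = 0 := by simp
    have hsum1 : ∀ ω, ∑ t ∈ Finset.Icc 1 1, X t ω = X 1 ω := by
      intro ω; rw [Finset.Icc_self, Finset.sum_singleton]
    set ε : ℝ := b * (Real.sqrt 5 * L) + b with hεdef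
    have hε : 0 < ε := by
      have := Real.sqrt_nonneg 5
      have : 0 ≤ b * (Real.sqrt 5 * L) := by positivity
      nlinarith
    have hnn : 0 ≤ᵐ[ℙ] fun ω => X 1 ω + b := by
      refine Filter.Eventually.of_forall fun ω => ?_
      have := (abs_le.1 (hXbdd 1 hX1mem ω)).1
      simp only [Pi.zero_apply]
      linarith
    have hmark := mul_meas_ge_le_integral_of_nonneg hnn (hX1int.add (integrable_const b)) ε
    have hintXb : ∫ ω, (X 1 ω + b) ∂ℙ = b := by
      rw [integral_add hX1int (integrable_const b), hEX1, integral_const]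
      simp
    rw [hintXb] at hmark
    have hsub : ℙ {ω : Ω | ∑ t ∈ Finset.Icc 1 1, X t ω
        ≤ Real.sqrt (4 * Vn ω * L + 5 * b ^ 2 * L ^ 2)}ᶜ
        ≤ ℙ {ω : Ω | ε ≤ X 1 ω + b} := by
      apply measure_mono_ae
      filter_upwards [hV0] with ω h0
      intro hmem
      have hmem' : ¬ (∑ t ∈ Finset.Icc 1 1, X t ω
          ≤ Real.sqrt (4 * Vn ω * L + 5 * b ^ 2 * L ^ 2)) := hmem
      push_neg at hmem'
      show ε ≤ X 1 ω + b
      rw [hsum1 ω] at hmem'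
      have hlow : b * (Real.sqrt 5 * L) ≤ Real.sqrt (4 * Vn ω * L + 5 * b ^ 2 * L ^ 2) := by
        have h5 : 5 * b ^ 2 * L ^ 2 = (b * L) ^ 2 * 5 := by ring
        have hle : (b * L) ^ 2 * 5 ≤ 4 * Vn ω * L + 5 * b ^ 2 * L ^ 2 := by nlinarith [mul_nonneg h0 hLpos.le]
        calc b * (Real.sqrt 5 * L) = Real.sqrt ((b * L) ^ 2 * 5) := by
              rw [Real.sqrt_mul (sq_nonneg _), Real.sqrt_sq (by positivity)]; ring
          _ ≤ _ := Real.sqrt_le_sqrt hle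
      rw [hεdef]
      linarith
    have harith := markov_arith hLpos.le h7'
    rw [hexpL1] at harith
    have hfinal : (ℙ {ω : Ω | ε ≤ X 1 ω + b}).toReal ≤ δ := by
      have hp0 : 0 ≤ (ℙ {ω : Ω | ε ≤ X 1 ω + b}).toReal := ENNReal.toReal_nonneg
      have hεδ : b ≤ δ * ε := by
        rw [hεdef]
        nlinarith
      rw [measureReal_def] at hmark
      nlinarith [hmark]
    calc ℙ {ω : Ω | ∑ t ∈ Finset.Icc 1 1, X t ω
          ≤ Real.sqrt (4 * Vn ω * L + 5 * b ^ 2 * L ^ 2)}ᶜ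
        ≤ ℙ {ω : Ω | ε ≤ X 1 ω + b} := hsub
      _ ≤ ENNReal.ofReal δ :=
          (ENNReal.le_ofReal_iff_toReal_le (measure_ne_top _ _) hδ.le).2 hfinal
  · -- bucket case
    have hL03 : (0.3:ℝ) ≤ L := by
      rw [hLdef, Real.le_log_iff_exp_le hndpos]
      have he : Real.exp (0.3:ℝ) ≤ 10 / 7 := by
        have h1 := Real.add_one_le_exp (-(0.3:ℝ))
        have h2 : Real.exp (0.3:ℝ) * Real.exp (-(0.3:ℝ)) = 1 := by rw [← Real.exp_add]; simp
        nlinarith [Real.exp_pos (-(0.3:ℝ))]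
      rcases Nat.lt_or_ge n 2 with hn2 | hn2
      · have hn1'' : n = 1 := by omega
        have hδ7 : δ ≤ 0.7 := by
          by_contra hcon
          push_neg at hcon
          exact hsplit ⟨hn1'', hcon⟩
        refine he.trans ?_
        rw [hn1'']
        rw [Nat.cast_one, le_div_iff₀ hδ]
        nlinarith
      · have hn2R : (2:ℝ) ≤ n := by exact_mod_cast hn2
        refine he.trans ?_
        rw [le_div_iff₀ hδ]
        nlinarith
    -- the bucket events
    set A : ℕ → Set Ω := fun k => {ω : Ω | L ≤ (if k = 0 then 1 else
        Real.sqrt (4 * k * L + 5 * L ^ 2) / ((k : ℝ) + 1 + Real.sqrt (4 * k * L + 5 * L ^ 2) / 3)) / b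
          * (∑ t ∈ Finset.Icc 1 n, X t ω)
        - (Real.exp (if k = 0 then 1 else
            Real.sqrt (4 * k * L + 5 * L ^ 2) / ((k : ℝ) + 1 + Real.sqrt (4 * k * L + 5 * L ^ 2) / 3))
            - 1 - (if k = 0 then 1 else
            Real.sqrt (4 * k * L + 5 * L ^ 2) / ((k : ℝ) + 1 + Real.sqrt (4 * k * L + 5 * L ^ 2) / 3)))
          / b ^ 2 * Vn ω} with hAdef
    have hlampos : ∀ k : ℕ, 0 < (if k = 0 then (1:ℝ) else
        Real.sqrt (4 * k * L + 5 * L ^ 2) / ((k : ℝ) + 1 + Real.sqrt (4 * k * L + 5 * L ^ 2) / 3)) := by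
      intro k
      by_cases hk : k = 0
      · simp [hk]
      · simp only [hk, if_false]
        have h1 : 0 < Real.sqrt (4 * k * L + 5 * L ^ 2) := by
          apply Real.sqrt_pos.2
          have : (0:ℝ) ≤ (k:ℝ) := Nat.cast_nonneg k
          nlinarith
        apply div_pos h1
        have h2 : (0:ℝ) ≤ (k:ℝ) := Nat.cast_nonneg k
        have h3 : 0 ≤ Real.sqrt (4 * k * L + 5 * L ^ 2) := Real.sqrt_nonneg _
        linarith
    have hAbound : ∀ k ∈ Finset.range n, ℙ (A k) ≤ ENNReal.ofReal (δ / n) :=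
      fun k _ => chernoff _ (hlampos k)
    have hincl : ℙ {ω : Ω | ∑ t ∈ Finset.Icc 1 n, X t ω
        ≤ Real.sqrt (4 * Vn ω * L + 5 * b ^ 2 * L ^ 2)}ᶜ
        ≤ ℙ (⋃ k ∈ Finset.range n, A k) := by
      apply measure_mono_ae
      filter_upwards [hV0, hVle] with ω h0 h1
      intro hmem
      have hmem' : ¬ (∑ t ∈ Finset.Icc 1 n, X t ω
          ≤ Real.sqrt (4 * Vn ω * L + 5 * b ^ 2 * L ^ 2)) := hmem
      push_neg at hmem'
      show ω ∈ ⋃ k ∈ Finset.range n, A k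
      set U : ℝ := Vn ω / b ^ 2 with hUdef
      have hU0 : 0 ≤ U := by positivity
      have hUn : U ≤ n := by
        rw [hUdef, div_le_iff₀ (by positivity)]
        linarith
      set k : ℕ := min (Nat.floor U) (n - 1) with hkdef
      have hkmem : k ∈ Finset.range n := by
        rw [Finset.mem_range, hkdef]
        omega
      have hkU : (k:ℝ) ≤ U := by
        calc (k:ℝ) ≤ (Nat.floor U : ℝ) := by
              exact_mod_cast min_le_left _ _
          _ ≤ U := Nat.floor_le hU0
      have hUk1 : U ≤ (k:ℝ) + 1 := by
        rcases le_or_gt (Nat.floor U) (n - 1) with hc | hc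
        · have hk' : k = Nat.floor U := min_eq_left hc
          rw [hk']
          exact (Nat.lt_floor_add_one U).le
        · have hk' : k = n - 1 := min_eq_right hc.le
          rw [hk']
          have : ((n - 1 : ℕ) : ℝ) = (n : ℝ) - 1 := by
            rw [Nat.cast_sub hn1, Nat.cast_one]
          rw [this]
          linarith
      have hVU : Vn ω = U * b ^ 2 := by
        rw [hUdef]; field_simp
      have hsqrt : Real.sqrt (4 * Vn ω * L + 5 * b ^ 2 * L ^ 2)
          = b * Real.sqrt (4 * U * L + 5 * L ^ 2) := by
        rw [hVU, show 4 * (U * b ^ 2) * L + 5 * b ^ 2 * L ^ 2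
          = b ^ 2 * (4 * U * L + 5 * L ^ 2) by ring]
        rw [Real.sqrt_mul (by positivity) _, Real.sqrt_sq hb.le]
      set y : ℝ := (∑ t ∈ Finset.Icc 1 n, X t ω) / b with hydef
      have hy : Real.sqrt (4 * U * L + 5 * L ^ 2) ≤ y := by
        rw [hydef, le_div_iff₀ hb]
        rw [hsqrt] at hmem'
        linarith
      refine Set.mem_biUnion hkmem ?_
      rw [hAdef]
      simp only [Set.mem_setOf_eq]
      set lamk : ℝ := (if k = 0 then (1:ℝ) else
        Real.sqrt (4 * k * L + 5 * L ^ 2) / ((k : ℝ) + 1 + Real.sqrt (4 * k * L + 5 * L ^ 2) / 3))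
        with hlamkdef
      have hSy : (∑ t ∈ Finset.Icc 1 n, X t ω) = y * b := by
        rw [hydef]; field_simp
      have hkey : L ≤ lamk * y - (Real.exp lamk - 1 - lamk) * U := by
        by_cases hk : k = 0
        · have h1 : lamk = 1 := by rw [hlamkdef, if_pos hk]
          rw [h1]
          have hU1 : U ≤ 1 := by
            have h2 := hUk1
            rw [hk] at h2
            simpa using h2
          exact bucket0 hL03 hU0 hU1 hy
        · have h1 : lamk = Real.sqrt (4 * k * L + 5 * L ^ 2)
              / ((k : ℝ) + 1 + Real.sqrt (4 * k * L + 5 * L ^ 2) / 3) := by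
            rw [hlamkdef, if_neg hk]
          rw [h1]
          have hK1 : (1:ℝ) ≤ (k:ℝ) := by
            have : 1 ≤ k := Nat.one_le_iff_ne_zero.2 hk
            exact_mod_cast this
          exact bucketk hK1 hL03 hkU hUk1 rfl rfl hy
      rw [hSy, hVU]
      calc L ≤ lamk * y - (Real.exp lamk - 1 - lamk) * U := hkey
        _ = lamk / b * (y * b) - (Real.exp lamk - 1 - lamk) / b ^ 2 * (U * b ^ 2) := by
            field_simp
    calc ℙ {ω : Ω | ∑ t ∈ Finset.Icc 1 n, X t ω
          ≤ Real.sqrt (4 * Vn ω * L + 5 * b ^ 2 * L ^ 2)}ᶜ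
        ≤ ℙ (⋃ k ∈ Finset.range n, A k) := hincl
      _ ≤ ∑ k ∈ Finset.range n, ℙ (A k) := measure_biUnion_finset_le _ _
      _ ≤ ∑ _k ∈ Finset.range n, ENNReal.ofReal (δ / n) := Finset.sum_le_sum hAbound
      _ = (n : ℕ) • ENNReal.ofReal (δ / n) := by rw [Finset.sum_const, Finset.card_range]
      _ = ENNReal.ofReal δ := by
          rw [nsmul_eq_mul, ← ENNReal.ofReal_natCast n, ← ENNReal.ofReal_mul (by positivity)]
          congr 1
          field_simp
end
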